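/- Let X be a centered normalized random variable in C^d taking n ≥ d+1 distinct values with probabilities p_1, ..., p_n, and let Y be an obtuse random variable on C^{n-1} (on the same probability space) with the same probabilities. Then there exists a linear map A : C^{n-1} → C^d satisfying A A* = I_d (a coisometry) such that X = A Y. -/

import Mathlib

open scoped BigOperators InnerProductSpace ComplexConjugate
open Matrix

/-- **Obtuse random variables generate all centered normalized random variables.**
Let `X` be a centered normalized random variable in `ℂ^d` taking `n ≥ d+1` distinct
values `v i` with positive probabilities `p i`, and let `Y` be an obtuse random
variable in `ℂ^{n-1}` on the same probability space with values `w i` and the same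
probabilities.  Then there is a linear map `A : ℂ^{n-1} → ℂ^d` with `A A* = I`
(a coisometry) such that `X = A Y`. -/
theorem centered_normalized_factors_through_obtuse (d n : ℕ) (hn : n ≥ d + 1)
    (p : Fin n → ℝ) (hp : ∀ i, 0 < p i) (hp1 : ∑ i, p i = 1)
    (v : Fin n → EuclideanSpace ℂ (Fin d)) (hv : Function.Injective v)
    (hcX : ∀ k, ∑ i, (p i : ℂ) * v i k = 0)
    (hnX : ∀ k l, ∑ i, (p i : ℂ) * ((starRingEnd ℂ) (v i k) * v i l)
        = if k = l then 1 else 0)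
    (w : Fin n → EuclideanSpace ℂ (Fin (n - 1))) (hw : Function.Injective w)
    (hcY : ∀ k, ∑ i, (p i : ℂ) * w i k = 0)
    (hnY : ∀ k l, ∑ i, (p i : ℂ) * ((starRingEnd ℂ) (w i k) * w i l)
        = if k = l then 1 else 0) :
    ∃ A : EuclideanSpace ℂ (Fin (n - 1)) →ₗ[ℂ] EuclideanSpace ℂ (Fin d),
      A ∘ₗ LinearMap.adjoint A = LinearMap.id ∧ ∀ i, v i = A (w i) := by
  classical
  have hpC : ∀ j, (p j : ℂ) ≠ 0 := fun j => by exact_mod_cast (ne_of_gt (hp j))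
  set q : Fin n → ℂ := fun j => ((Real.sqrt (p j) : ℝ) : ℂ) with hqdef
  have hq_conj : ∀ j, (starRingEnd ℂ) (q j) = q j := fun j => Complex.conj_ofReal _
  have hq_sq : ∀ j, q j * q j = (p j : ℂ) := by
    intro j
    rw [hqdef, ← Complex.ofReal_mul, Real.mul_self_sqrt (hp j).le]
  have hq_ne : ∀ j, q j ≠ 0 := by
    intro j h
    exact hpC j (by rw [← hq_sq j, h, mul_zero])
  have hn1 : n - 1 + 1 = n := by omega
  let eqv : Fin n ≃ Option (Fin (n - 1)) := (finCongr hn1.symm).trans (finSuccEquiv (n - 1))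
  let c : Option (Fin (n - 1)) → Fin n → ℂ := fun o j =>
    Option.rec (q j) (fun m => q j * w j m) o
  let B : Matrix (Fin n) (Fin n) ℂ := Matrix.of fun m j => c (eqv m) j
  have hBB : B * Bᴴ = 1 := by
    ext m m'
    have h1 : (B * Bᴴ) m m' = ∑ j, c (eqv m) j * (starRingEnd ℂ) (c (eqv m') j) := by
      simp [Matrix.mul_apply, B, Matrix.conjTranspose_apply]
    have h2 : (1 : Matrix (Fin n) (Fin n) ℂ) m m' = if eqv m = eqv m' then 1 else 0 := by
      rw [Matrix.one_apply]
      simp [Equiv.apply_eq_iff_eq]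
    rw [h1, h2]
    rcases ho : eqv m with _ | k <;> rcases ho' : eqv m' with _ | l
    · -- none, none
      show ∑ j, q j * (starRingEnd ℂ) (q j) = _
      simp only [hq_conj, hq_sq]
      simp only [if_true, reduceIte]
      exact_mod_cast hp1
    · -- none, some l
      show ∑ j, q j * (starRingEnd ℂ) (q j * w j l) = _
      rw [if_neg (by simp)]
      have : ∀ j, q j * (starRingEnd ℂ) (q j * w j l)
          = (starRingEnd ℂ) ((p j : ℂ) * w j l) := by
        intro j
        simp only [_root_.map_mul, hq_conj, Complex.conj_ofReal]
        rw [← hq_sq j]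
        ring
      rw [Finset.sum_congr rfl fun j _ => this j, ← map_sum, hcY l, map_zero]
    · -- some k, none
      show ∑ j, (q j * w j k) * (starRingEnd ℂ) (q j) = _
      rw [if_neg (by simp)]
      have : ∀ j, (q j * w j k) * (starRingEnd ℂ) (q j) = (p j : ℂ) * w j k := by
        intro j
        rw [hq_conj, ← hq_sq j]; ring
      rw [Finset.sum_congr rfl fun j _ => this j, hcY k]
    · -- some k, some l
      show ∑ j, (q j * w j k) * (starRingEnd ℂ) (q j * w j l) = _
      have : ∀ j, (q j * w j k) * (starRingEnd ℂ) (q j * w j l)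
          = (p j : ℂ) * ((starRingEnd ℂ) (w j l) * w j k) := by
        intro j
        simp only [_root_.map_mul, hq_conj]
        rw [← hq_sq j]; ring
      rw [Finset.sum_congr rfl fun j _ => this j, hnY l k]
      simp [eq_comm]
  have hB2 : Bᴴ * B = 1 := mul_eq_one_comm.mp hBB
  -- Completeness relation
  have key : ∀ i j, q i * q j * (1 + ∑ m, (starRingEnd ℂ) (w i m) * w j m)
      = if i = j then 1 else 0 := by
    intro i j
    have h : (Bᴴ * B) i j = (1 : Matrix (Fin n) (Fin n) ℂ) i j := by rw [hB2]
    have h1 : (Bᴴ * B) i j = ∑ o : Option (Fin (n - 1)),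
        (starRingEnd ℂ) (c o i) * c o j := by
      rw [Matrix.mul_apply]
      rw [← Equiv.sum_comp eqv (fun o => (starRingEnd ℂ) (c o i) * c o j)]
      simp [B, Matrix.conjTranspose_apply]
    rw [h1, Matrix.one_apply] at h
    rw [Fintype.sum_option] at h
    have h2 : ((starRingEnd ℂ) (c none i) * c none j
        + ∑ m, (starRingEnd ℂ) (c (some m) i) * c (some m) j)
        = q i * q j * (1 + ∑ m, (starRingEnd ℂ) (w i m) * w j m) := by
      show ((starRingEnd ℂ) (q i) * q j
          + ∑ m, (starRingEnd ℂ) (q i * w i m) * (q j * w j m)) = _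
      simp only [_root_.map_mul, hq_conj]
      rw [mul_add, mul_one, Finset.mul_sum]
      congr 1
      apply Finset.sum_congr rfl
      intro m _
      ring
    rw [h2] at h
    exact h
  have hS : ∀ i j, ∑ m, (starRingEnd ℂ) (w i m) * w j m
      = (if i = j then ((p i : ℂ))⁻¹ else 0) - 1 := by
    intro i j
    by_cases hij : i = j
    · subst hij
      have h1 := key i i
      rw [hq_sq, if_pos rfl] at h1
      have h2 : (p i : ℂ) * ((p i : ℂ))⁻¹ = 1 := mul_inv_cancel₀ (hpC i)
      rw [if_pos rfl]
      linear_combination ((p i : ℂ))⁻¹ * h1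
        - (1 + ∑ m, (starRingEnd ℂ) (w i m) * w i m) * h2
    · have h1 := key i j
      rw [if_neg hij] at h1
      rcases mul_eq_zero.mp h1 with h | h
      · exact absurd (mul_eq_zero.mp h) (by push_neg; exact ⟨hq_ne i, hq_ne j⟩)
      · rw [if_neg hij, zero_sub, eq_neg_iff_add_eq_zero, add_comm]
        exact h
  -- the matrix of the linear map
  let M : Matrix (Fin d) (Fin (n - 1)) ℂ :=
    Matrix.of fun k m => ∑ j, (p j : ℂ) * v j k * (starRingEnd ℂ) (w j m)
  have hMM : M * Mᴴ = 1 := by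
    ext k l
    have h1 : (M * Mᴴ) k l = ∑ m, (∑ i, (p i : ℂ) * v i k * (starRingEnd ℂ) (w i m))
        * (∑ j, (p j : ℂ) * (starRingEnd ℂ) (v j l) * w j m) := by
      rw [Matrix.mul_apply]
      apply Finset.sum_congr rfl
      intro m _
      congr 1
      simp [M, Matrix.conjTranspose_apply, map_sum, _root_.map_mul, Complex.conj_ofReal]
    rw [h1]
    have h2 : ∀ m, (∑ i, (p i : ℂ) * v i k * (starRingEnd ℂ) (w i m))
        * (∑ j, (p j : ℂ) * (starRingEnd ℂ) (v j l) * w j m)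
        = ∑ i, ∑ j, ((p i : ℂ) * v i k) * ((p j : ℂ) * (starRingEnd ℂ) (v j l))
            * ((starRingEnd ℂ) (w i m) * w j m) := by
      intro m
      rw [Finset.sum_mul_sum]
      apply Finset.sum_congr rfl; intro i _
      apply Finset.sum_congr rfl; intro j _
      ring
    rw [Finset.sum_congr rfl fun m _ => h2 m]
    rw [Finset.sum_comm]
    have h3 : ∀ i, ∑ m, ∑ j, ((p i : ℂ) * v i k) * ((p j : ℂ) * (starRingEnd ℂ) (v j l))
        * ((starRingEnd ℂ) (w i m) * w j m)
        = ∑ j, ((p i : ℂ) * v i k) * ((p j : ℂ) * (starRingEnd ℂ) (v j l))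
            * ((if i = j then ((p i : ℂ))⁻¹ else 0) - 1) := by
      intro i
      rw [Finset.sum_comm]
      apply Finset.sum_congr rfl
      intro j _
      rw [← Finset.mul_sum, hS i j]
    rw [Finset.sum_congr rfl fun i _ => h3 i]
    have h4 : ∀ i, ∑ j, ((p i : ℂ) * v i k) * ((p j : ℂ) * (starRingEnd ℂ) (v j l))
        * ((if i = j then ((p i : ℂ))⁻¹ else 0) - 1)
        = (p i : ℂ) * ((starRingEnd ℂ) (v i l) * v i k)
          - ((p i : ℂ) * v i k) * ∑ j, (p j : ℂ) * (starRingEnd ℂ) (v j l) := by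
      intro i
      have hterm : ∀ j, ((p i : ℂ) * v i k) * ((p j : ℂ) * (starRingEnd ℂ) (v j l))
          * ((if i = j then ((p i : ℂ))⁻¹ else 0) - 1)
          = (if j = i then (p i : ℂ) * ((starRingEnd ℂ) (v i l) * v i k) else 0)
            - ((p i : ℂ) * v i k) * ((p j : ℂ) * (starRingEnd ℂ) (v j l)) := by
        intro j
        by_cases hij : i = j
        · subst hij
          rw [if_pos rfl, if_pos rfl]
          have h2 : (p i : ℂ) * ((p i : ℂ))⁻¹ = 1 := mul_inv_cancel₀ (hpC i)
          linear_combination ((p i : ℂ) * (v i k * (starRingEnd ℂ) (v i l))) * h2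
        · rw [if_neg hij, if_neg (Ne.symm hij)]
          ring
      rw [Finset.sum_congr rfl fun j _ => hterm j]
      rw [Finset.sum_sub_distrib, Finset.sum_ite_eq' Finset.univ i
        (fun _ => (p i : ℂ) * ((starRingEnd ℂ) (v i l) * v i k)), Finset.mul_sum]
      simp
    rw [Finset.sum_congr rfl fun i _ => h4 i, Finset.sum_sub_distrib]
    have h5 : ∑ i, ((p i : ℂ) * v i k) * ∑ j, (p j : ℂ) * (starRingEnd ℂ) (v j l)
        = (∑ i, (p i : ℂ) * v i k) * ∑ j, (p j : ℂ) * (starRingEnd ℂ) (v j l) := by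
      rw [Finset.sum_mul]
    rw [h5, hcX k, zero_mul, sub_zero, hnX l k, Matrix.one_apply]
    simp [eq_comm]
  refine ⟨Matrix.toEuclideanLin M, ?_, ?_⟩
  · rw [← Matrix.toEuclideanLin_conjTranspose_eq_adjoint]
    apply LinearMap.ext
    intro x
    simp only [LinearMap.comp_apply, Matrix.toEuclideanLin_apply, LinearMap.id_apply,
      Equiv.apply_symm_apply, Matrix.mulVec_mulVec, hMM, Matrix.one_mulVec]
  · intro i
    ext k
    have hA : (Matrix.toEuclideanLin M (w i)) k
        = ∑ m, M k m * w i m := by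
      rw [Matrix.toEuclideanLin_apply]
      simp [Matrix.mulVec, dotProduct]
    rw [hA]
    have h1 : ∀ m, M k m * w i m
        = ∑ j, ((p j : ℂ) * v j k) * ((starRingEnd ℂ) (w j m) * w i m) := by
      intro m
      show (∑ j, (p j : ℂ) * v j k * (starRingEnd ℂ) (w j m)) * w i m = _
      rw [Finset.sum_mul]
      apply Finset.sum_congr rfl
      intro j _
      ring
    rw [Finset.sum_congr rfl fun m _ => h1 m, Finset.sum_comm]
    have h2 : ∀ j, ∑ m, ((p j : ℂ) * v j k) * ((starRingEnd ℂ) (w j m) * w i m)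
        = ((p j : ℂ) * v j k) * ((if j = i then ((p j : ℂ))⁻¹ else 0) - 1) := by
      intro j
      rw [← Finset.mul_sum, hS j i]
    rw [Finset.sum_congr rfl fun j _ => h2 j]
    have h3 : ∀ j, ((p j : ℂ) * v j k) * ((if j = i then ((p j : ℂ))⁻¹ else 0) - 1)
        = (if j = i then v i k else 0) - (p j : ℂ) * v j k := by
      intro j
      by_cases hij : j = i
      · subst hij
        rw [if_pos rfl, if_pos rfl]
        have h2 : (p j : ℂ) * ((p j : ℂ))⁻¹ = 1 := mul_inv_cancel₀ (hpC j)
        linear_combination (v j k) * h2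
      · rw [if_neg hij, if_neg hij]
        ring
    rw [Finset.sum_congr rfl fun j _ => h3 j, Finset.sum_sub_distrib,
      Finset.sum_ite_eq' Finset.univ i (fun _ => v i k), hcX k]
    simp
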